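/- Theorem 2 (matrix form, value): let ε > 0 and let a* be the embedding factor. Then the set of real numbers { Real.log (det Σs) : (μs, Σs) feasible } has greatest element n · Real.log a* + Real.log (det Σc), and this greatest value is attained at the feasible pair μs = μc, Σs = a* • Σc. -/

import Mathlib

open Matrix

/-- The (forward) Gaussian KL expression. -/
noncomputable def klGauss {n : ℕ} (Sc : Matrix (Fin n) (Fin n) ℝ) (μc : Fin n → ℝ)
    (Ss : Matrix (Fin n) (Fin n) ℝ) (μs : Fin n → ℝ) : ℝ :=
  (1 / 2) * ((Sc⁻¹ * Ss).trace + (μc - μs) ⬝ᵥ (Sc⁻¹ *ᵥ (μc - μs))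
    + Real.log (Sc.det / Ss.det) - n)

lemma myTraceEig {n : ℕ} {A : Matrix (Fin n) (Fin n) ℝ} (hA : A.IsHermitian) :
    A.trace = ∑ i, hA.eigenvalues i := by
  rw [hA.trace_eq_sum_eigenvalues]
  simp

lemma myScalar {l a : ℝ} (hl : 0 < l) (ha : 0 < a) :
    a * Real.log l ≤ l + (a * Real.log a - a) := by
  have h := Real.log_le_sub_one_of_pos (div_pos hl ha)
  rw [Real.log_div hl.ne' ha.ne'] at h
  have h2 := mul_le_mul_of_nonneg_left h ha.le
  have h3 : a * (l / a - 1) = l - a := by field_simp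
  nlinarith

lemma myLogDet {n : ℕ} {M : Matrix (Fin n) (Fin n) ℝ} (hM : M.PosSemidef)
    (hdet : 0 < M.det) {a : ℝ} (ha : 0 < a) :
    a * Real.log M.det ≤ M.trace + n * (a * Real.log a - a) := by
  have hdet' : M.det = ∏ i, hM.1.eigenvalues i := by
    rw [hM.1.det_eq_prod_eigenvalues]; norm_cast
  have hpos : ∀ i, 0 < hM.1.eigenvalues i := by
    intro i
    rcases (hM.eigenvalues_nonneg i).lt_or_eq with h | h
    · exact h
    · exfalso
      rw [hdet', Finset.prod_eq_zero (Finset.mem_univ i) h.symm] at hdet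
      exact lt_irrefl 0 hdet
  have hlog : Real.log M.det = ∑ i, Real.log (hM.1.eigenvalues i) := by
    rw [hdet', Real.log_prod (fun i _ => (hpos i).ne')]
  rw [hlog, myTraceEig hM.1, Finset.mul_sum]
  calc ∑ i, a * Real.log (hM.1.eigenvalues i)
      ≤ ∑ i, (hM.1.eigenvalues i + (a * Real.log a - a)) :=
        Finset.sum_le_sum fun i _ => myScalar (hpos i) ha
    _ = (∑ i, hM.1.eigenvalues i) + n * (a * Real.log a - a) := by
        rw [Finset.sum_add_distrib, Finset.sum_const, Finset.card_univ, Fintype.card_fin,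
          nsmul_eq_mul]

/-- Theorem 2 (matrix form, value): the set of `log det Σs` over feasible pairs
`(μs, Σs)` has greatest element `n · log a* + log det Σc`, attained at
`μs = μc`, `Σs = a* • Σc`. -/
theorem klGauss_max_logdet {n : ℕ} (hn : 1 ≤ n)
    (Sc : Matrix (Fin n) (Fin n) ℝ) (hSc : Sc.PosDef) (μc : Fin n → ℝ)
    (ε : ℝ) (hε : 0 < ε)
    (astar : ℝ) (hastar1 : 1 ≤ astar)
    (hastar : astar - Real.log astar - 1 = 4 * ε ^ 2 / n) :
    IsGreatest
        {x : ℝ | ∃ (μs : Fin n → ℝ) (Ss : Matrix (Fin n) (Fin n) ℝ),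
          Ss.PosDef ∧ klGauss Sc μc Ss μs ≤ 2 * ε ^ 2 ∧ x = Real.log Ss.det}
        ((n : ℝ) * Real.log astar + Real.log Sc.det) ∧
      (astar • Sc).PosDef ∧ klGauss Sc μc (astar • Sc) μc ≤ 2 * ε ^ 2 ∧
        Real.log (astar • Sc).det = (n : ℝ) * Real.log astar + Real.log Sc.det := by
  have hnpos : (0 : ℝ) < n := by exact_mod_cast hn
  have hdSc : 0 < Sc.det := hSc.det_pos
  have ha0 : 0 < astar := lt_of_lt_of_le one_pos hastar1
  have ha1 : 1 < astar := by
    rcases hastar1.lt_or_eq with h | h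
    · exact h
    · exfalso
      rw [← h] at hastar
      simp at hastar
      have : 0 < 4 * ε ^ 2 / n := by positivity
      rw [← hastar] at this
      exact lt_irrefl 0 this
  have hinv : Sc⁻¹ * Sc = 1 := Matrix.nonsing_inv_mul Sc hdSc.ne'.isUnit
  -- pos def of astar • Sc
  have hPD : (astar • Sc).PosDef := by
    exact hSc.smul ha0
  -- log det of astar • Sc
  have hdet_smul : (astar • Sc).det = astar ^ n * Sc.det := by
    rw [Matrix.det_smul]; simp
  have hlogdet : Real.log (astar • Sc).det = (n : ℝ) * Real.log astar + Real.log Sc.det := by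
    rw [hdet_smul, Real.log_mul (by positivity) hdSc.ne', Real.log_pow]
  -- value of klGauss at the candidate
  have hval : klGauss Sc μc (astar • Sc) μc = 2 * ε ^ 2 := by
    unfold klGauss
    rw [Matrix.mul_smul, hinv, Matrix.trace_smul, Matrix.trace_one, sub_self]
    simp only [Fintype.card_fin, smul_eq_mul]
    have h0 : (0 : Fin n → ℝ) ⬝ᵥ (Sc⁻¹ *ᵥ (0 : Fin n → ℝ)) = 0 := by simp
    rw [h0, hdet_smul]
    have hd : Sc.det / (astar ^ n * Sc.det) = (astar ^ n)⁻¹ := by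
      field_simp
    rw [hd, Real.log_inv, Real.log_pow]
    have key : (n : ℝ) * (astar - Real.log astar - 1) = 4 * ε ^ 2 := by
      rw [hastar]; field_simp
    linear_combination key / 2
  refine ⟨⟨⟨μc, astar • Sc, hPD, le_of_eq hval, hlogdet.symm⟩, ?_⟩, hPD, le_of_eq hval, hlogdet⟩
  -- upper bound
  rintro x ⟨μs, Ss, hSs, hD, rfl⟩
  have hdSs : 0 < Ss.det := hSs.det_pos
  obtain ⟨B, hB, hBB⟩ : ∃ B : Matrix (Fin n) (Fin n) ℝ, B.PosSemidef ∧ B * B = Ss := by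
    open scoped MatrixOrder in
    exact ⟨CFC.sqrt Ss, Matrix.nonneg_iff_posSemidef.mp (CFC.sqrt_nonneg Ss),
      CFC.sqrt_mul_sqrt_self Ss (Matrix.nonneg_iff_posSemidef.mpr hSs.posSemidef)⟩
  have hdetB : B.det * B.det = Ss.det := by rw [← Matrix.det_mul, hBB]
  set M := B * Sc⁻¹ * B with hMdef
  have hM : M.PosSemidef := by
    have := hSc.inv.posSemidef.conjTranspose_mul_mul_same B
    rwa [hB.1] at this
  have hdetM : M.det = Ss.det / Sc.det := by
    rw [hMdef, Matrix.det_mul, Matrix.det_mul, Matrix.det_nonsing_inv]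
    rw [mul_comm B.det, mul_assoc, hdetB]
    rw [Ring.inverse_eq_inv']
    field_simp
  have hdetMpos : 0 < M.det := by rw [hdetM]; positivity
  have htr : M.trace = (Sc⁻¹ * Ss).trace := by
    rw [hMdef, Matrix.trace_mul_cycle, Matrix.trace_mul_comm, hBB]
  -- quadratic term nonneg
  have hq : 0 ≤ (μc - μs) ⬝ᵥ (Sc⁻¹ *ᵥ (μc - μs)) := by
    have := hSc.inv.posSemidef.dotProduct_mulVec_nonneg (μc - μs)
    simpa using this
  -- main inequality from logdet lemma
  have hlog1 := myLogDet hM hdetMpos ha0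
  rw [hdetM, htr, Real.log_div hdSs.ne' hdSc.ne'] at hlog1
  -- from the constraint
  have hconstr : (Sc⁻¹ * Ss).trace + Real.log (Sc.det / Ss.det) - n ≤ 4 * ε ^ 2 := by
    unfold klGauss at hD
    linarith
  rw [Real.log_div hdSc.ne' hdSs.ne'] at hconstr
  have key : (n : ℝ) * (astar - Real.log astar - 1) = 4 * ε ^ 2 := by
    rw [hastar]; field_simp
  -- combine
  have hL : (astar - 1) * (Real.log Ss.det - Real.log Sc.det) ≤
      (astar - 1) * ((n : ℝ) * Real.log astar) := by nlinarith [hlog1, hconstr, key]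
  have := (mul_le_mul_iff_right₀ (by linarith : (0:ℝ) < astar - 1)).mp hL
  linarith
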